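/- Adopt the Grid setup. Then for every j ∈ {1,…,K}, l ∈ {1,…,K'}, every x with a_{jl} + L/(5K') < x ≤ a_{j(l+1)} − L/(5K'), and every pair (t,s) ∈ {1,…,K}×{1,…,K'} with (t,s) ≠ (j,l), one has exp(−(x−μ_{ts})²/(2σ²) + (x−μ_{jl})²/(2σ²)) ≤ exp(−K'/30). -/

import Mathlib

open MeasureTheory

noncomputable section

/-- Width `L = (b-a)/K` of the coarse grid. -/
def gL (a b : ℝ) (K : ℕ) : ℝ := (b - a) / K

/-- Left endpoint `a_{jl} = a + (j-1)L + (l-1)L/K'` of the `(j,l)`-th subinterval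
(0-indexed: `j : Fin K`, `l : Fin K'`). -/
def gA (a b : ℝ) (K K' : ℕ) (j : Fin K) (l : Fin K') : ℝ :=
  a + (j : ℕ) * gL a b K + (l : ℕ) * gL a b K / K'

/-- Midpoint `c_{jl}` of the `(j,l)`-th subinterval. -/
def gC (a b : ℝ) (K K' : ℕ) (j : Fin K) (l : Fin K') : ℝ :=
  gA a b K K' j l + gL a b K / (2 * K')

/-- The Gaussian softmax weight `π_{jl}(x)`. -/
def gPi (a b : ℝ) (K K' : ℕ) (μ : Fin K → Fin K' → ℝ) (σ2 : ℝ)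
    (j : Fin K) (l : Fin K') (x : ℝ) : ℝ :=
  Real.exp (-(x - μ j l) ^ 2 / (2 * σ2)) /
    ∑ t : Fin K, ∑ s : Fin K', Real.exp (-(x - μ t s) ^ 2 / (2 * σ2))

end

theorem stmt5 (a b : ℝ) (hab : a < b) (K K' : ℕ) (hK : 0 < K) (hK' : 0 < K')
    (μ : Fin K → Fin K' → ℝ)
    (hμ : ∀ j l, |μ j l - gC a b K K' j l| ≤ gL a b K / (6 * K'))
    (σ2 : ℝ) (hσl : gL a b K ^ 2 / (2 * (K' : ℝ) ^ 3) ≤ σ2)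
    (hσu : σ2 ≤ gL a b K ^ 2 / (K' : ℝ) ^ 3) :
    ∀ (j : Fin K) (l : Fin K') (x : ℝ),
      gA a b K K' j l + gL a b K / (5 * K') < x →
      x ≤ gA a b K K' j l + gL a b K / K' - gL a b K / (5 * K') →
      ∀ (t : Fin K) (s : Fin K'), (t, s) ≠ (j, l) →
        Real.exp (-(x - μ t s) ^ 2 / (2 * σ2) + (x - μ j l) ^ 2 / (2 * σ2))
          ≤ Real.exp (-(K' : ℝ) / 30) := by
  intro j l x hx1 hx2 t s hne
  have hba : 0 < b - a := by linarith
  have hKR : (0:ℝ) < K := Nat.cast_pos.mpr hK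
  have hK'R : (0:ℝ) < K' := Nat.cast_pos.mpr hK'
  set L := gL a b K with hLdef
  have hL : 0 < L := div_pos hba hKR
  set d : ℝ := L / K' with hd
  have hdpos : 0 < d := div_pos hL hK'R
  have hLd : L = K' * d := by rw [hd]; field_simp
  have e5 : L / (5 * K') = d / 5 := by rw [hd, div_div, mul_comm]
  have e6 : L / (6 * K') = d / 6 := by rw [hd, div_div, mul_comm]
  have e2 : L / (2 * K') = d / 2 := by rw [hd, div_div, mul_comm]
  have hσpos : 0 < σ2 := lt_of_lt_of_le (by positivity) hσl
  have hσK : (K':ℝ) * σ2 ≤ d ^ 2 := by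
    have h3 : L ^ 2 / (K':ℝ) ^ 3 = d ^ 2 / K' := by rw [hd]; field_simp
    rw [h3, le_div_iff₀ hK'R] at hσu
    linarith
  have hcjl : gC a b K K' j l = gA a b K K' j l + d / 2 := by
    unfold gC; rw [← hLdef, e2]
  -- the integer separation
  set m : ℤ := ((t : ℤ) - (j : ℤ)) * K' + ((s : ℤ) - (l : ℤ)) with hm_def
  have hm : m ≠ 0 := by
    intro h0
    have hs := s.isLt; have hl := l.isLt
    have hK'z : (0:ℤ) < K' := by exact_mod_cast hK'
    have hu : (t : ℤ) - (j : ℤ) = 0 := by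
      rcases lt_trichotomy ((t:ℤ) - (j:ℤ)) 0 with h | h | h
      · have h1 : (t:ℤ) - j ≤ -1 := by omega
        have h2 : ((t:ℤ) - j) * K' ≤ (-1) * K' :=
          mul_le_mul_of_nonneg_right h1 (le_of_lt hK'z)
        rw [hm_def] at h0
        have hl' : ((l:ℤ)) < K' := by exact_mod_cast hl
        linarith
      · exact h
      · have h1 : (1:ℤ) ≤ (t:ℤ) - j := by omega
        have h2 : (1:ℤ) * K' ≤ ((t:ℤ) - j) * K' :=
          mul_le_mul_of_nonneg_right h1 (le_of_lt hK'z)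
        rw [hm_def] at h0
        have hs' : ((s:ℤ)) < K' := by exact_mod_cast hs
        linarith
    apply hne
    have ht' : t = j := by apply Fin.ext; omega
    have hs' : s = l := by
      rw [hm_def, hu, zero_mul, zero_add] at h0
      apply Fin.ext; omega
    rw [ht', hs']
  have hcd : gC a b K K' t s - gC a b K K' j l = (m : ℝ) * d := by
    unfold gC gA
    rw [← hLdef, hm_def]
    push_cast
    rw [hLd]
    field_simp
    ring
  have hm1 : (1:ℝ) ≤ |(m : ℝ)| := by
    have := Int.one_le_abs hm
    have : ((1:ℤ):ℝ) ≤ ((|m|:ℤ):ℝ) := by exact_mod_cast this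
    simpa using this
  have hcd_abs : d ≤ |gC a b K K' t s - gC a b K K' j l| := by
    rw [hcd, abs_mul, abs_of_pos hdpos]
    nlinarith
  -- rewrite x bounds
  rw [e5] at hx1
  rw [e5] at hx2
  have hxc : |x - gC a b K K' j l| ≤ 3 * d / 10 := by
    rw [abs_le, hcjl]
    constructor <;> [linarith; linarith]
  obtain ⟨hxc1, hxc2⟩ := abs_le.mp hxc
  have h1 := hμ j l; rw [e6] at h1
  have h2 := hμ t s; rw [e6] at h2
  obtain ⟨h11, h12⟩ := abs_le.mp h1
  obtain ⟨h21, h22⟩ := abs_le.mp h2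
  have hA : 8 * d / 15 ≤ |x - μ t s| := by
    rcases le_abs.mp hcd_abs with hca | hca
    · have hkey : 8 * d / 15 ≤ μ t s - x := by linarith
      calc 8 * d / 15 ≤ μ t s - x := hkey
        _ ≤ |μ t s - x| := le_abs_self _
        _ = |x - μ t s| := abs_sub_comm _ _
    · have hkey : 8 * d / 15 ≤ x - μ t s := by linarith
      exact le_trans hkey (le_abs_self _)
  have hB : |x - μ j l| ≤ 7 * d / 15 := by
    rw [abs_le]
    constructor <;> [linarith; linarith]
  have hA2 : (8 * d / 15) ^ 2 ≤ (x - μ t s) ^ 2 := by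
    rw [← sq_abs (x - μ t s)]
    exact pow_le_pow_left₀ (by positivity) hA 2
  have hB2 : (x - μ j l) ^ 2 ≤ (7 * d / 15) ^ 2 := by
    rw [← sq_abs (x - μ j l)]
    exact pow_le_pow_left₀ (abs_nonneg _) hB 2
  rw [Real.exp_le_exp]
  have h2σ : (0:ℝ) < 2 * σ2 := by linarith
  rw [← add_div, div_le_iff₀ h2σ]
  have hsq : (8 * d / 15) ^ 2 - (7 * d / 15) ^ 2 = d ^ 2 / 15 := by ring
  linarith [hA2, hB2, hσK, hsq]
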